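/- Let R = k[x,y] and V ⊆ R_j with V ≠ 0. Then τ(V) = 1 if and only if V = f·R_{j−c} for some homogeneous form f of degree c = j+1−dim V (the codimension of V in R_j). -/

import Mathlib

set_option maxHeartbeats 1000000

open MvPolynomial Submodule Module

variable {k : Type*} [Field k]

noncomputable abbrev Rh (k : Type*) [Field k] (i : ℕ) :
    Submodule k (MvPolynomial (Fin 2) k) :=
  MvPolynomial.homogeneousSubmodule (Fin 2) k i

noncomputable def mulV (i : ℕ) (V : Submodule k (MvPolynomial (Fin 2) k)) :
    Submodule k (MvPolynomial (Fin 2) k) :=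
  Submodule.span k {p | ∃ h ∈ Rh k i, ∃ f ∈ V, p = h * f}

section Aux

private lemma weight_one_fin2 (d : Fin 2 →₀ ℕ) :
    (Finsupp.weight (1 : Fin 2 → ℕ)) d = d 0 + d 1 := by
  simp [Finsupp.weight_apply, Finsupp.sum_fintype, Fin.sum_univ_two]

private lemma fin2_decomp (d : Fin 2 →₀ ℕ) :
    d = Finsupp.single 0 (d 0) + Finsupp.single 1 (d 1) := by
  ext i
  fin_cases i <;> simp [Finsupp.single_apply]

/-- The monomial `x^a y^b`. -/
private noncomputable def mn (a b : ℕ) : MvPolynomial (Fin 2) k :=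
  monomial (Finsupp.single 0 a + Finsupp.single 1 b) 1

private lemma mn_def (a b : ℕ) :
    mn (k := k) a b = monomial (Finsupp.single 0 a + Finsupp.single 1 b) 1 := rfl

private lemma mn_congr {a b c d : ℕ} (h1 : a = c) (h2 : b = d) :
    mn (k := k) a b = mn c d := by rw [h1, h2]

private lemma mn_mem {a b m : ℕ} (h : a + b = m) : mn (k := k) a b ∈ Rh k m := by
  rw [mn_def, mem_homogeneousSubmodule]
  apply isHomogeneous_monomial
  rw [Finsupp.degree_eq_weight_one]
  show (Finsupp.weight (1 : Fin 2 → ℕ)) _ = m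
  rw [weight_one_fin2]
  simp [Finsupp.single_apply, h]

private lemma mn_mul (a b c d : ℕ) :
    mn (k := k) a b * mn c d = mn (a + c) (b + d) := by
  rw [mn_def, mn_def, mn_def, monomial_mul, one_mul]
  congr 1
  rw [Finsupp.single_add, Finsupp.single_add]
  abel

private lemma mn_X0 : mn (k := k) 1 0 = X 0 := by
  rw [mn_def, Finsupp.single_zero, add_zero]
  rfl

private lemma mn_X1 : mn (k := k) 0 1 = X 1 := by
  rw [mn_def, Finsupp.single_zero, zero_add]
  rfl

private lemma Rh_eq_span (m : ℕ) :
    Rh k m = span k (Set.range fun i : Fin (m + 1) => mn (k := k) (i : ℕ) (m - i)) := by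
  apply le_antisymm
  · intro p hp
    rw [mem_homogeneousSubmodule] at hp
    rw [p.as_sum]
    apply Submodule.sum_mem
    intro d hd
    have hc : coeff d p ≠ 0 := mem_support_iff.mp hd
    have hw : (Finsupp.weight (1 : Fin 2 → ℕ)) d = m := hp hc
    rw [weight_one_fin2] at hw
    have hmono : monomial d (coeff d p) = (coeff d p) • mn (k := k) (d 0) (d 1) := by
      rw [mn_def, ← fin2_decomp, smul_monomial, smul_eq_mul, mul_one]
    rw [hmono]
    apply Submodule.smul_mem
    apply subset_span
    refine ⟨⟨d 0, by omega⟩, ?_⟩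
    show mn (k := k) (d 0) (m - d 0) = mn (d 0) (d 1)
    exact mn_congr rfl (by omega)
  · rw [span_le]
    rintro _ ⟨i, rfl⟩
    have := i.isLt
    exact mn_mem (by omega)

private lemma li_mn (m : ℕ) :
    LinearIndependent k (fun i : Fin (m + 1) => mn (k := k) (i : ℕ) (m - i)) := by
  have h := (basisMonomials (Fin 2) k).linearIndependent
  have hinj : Function.Injective
      (fun i : Fin (m + 1) => Finsupp.single (0 : Fin 2) (i : ℕ) + Finsupp.single 1 (m - i)) := by
    intro i i' hii'
    have h0 := DFunLike.congr_fun hii' (0 : Fin 2)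
    simp only [Finsupp.add_apply, Finsupp.single_apply] at h0
    norm_num at h0
    exact Fin.ext h0
  have h2 := h.comp
    (fun i : Fin (m + 1) => Finsupp.single (0 : Fin 2) (i : ℕ) + Finsupp.single 1 (m - i))
    hinj
  exact h2

instance finiteDimensional_Rh (m : ℕ) : FiniteDimensional k (Rh k m) := by
  rw [Rh_eq_span (k := k) m]
  exact FiniteDimensional.span_of_finite k (Set.finite_range _)

lemma finrank_Rh (m : ℕ) : finrank k (Rh k m) = m + 1 := by
  rw [Rh_eq_span (k := k) m, finrank_span_eq_card (li_mn m)]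
  simp

private lemma Rh_zero : Rh k 0 = span k {(1 : MvPolynomial (Fin 2) k)} := by
  have h1 : mn (k := k) 0 0 = 1 := by
    rw [mn_def]
    simp [monomial_zero']
  apply le_antisymm
  · rw [Rh_eq_span (k := k) 0, span_le]
    rintro _ ⟨i, rfl⟩
    have h2 : (i : ℕ) = 0 := by omega
    show mn (k := k) (i : ℕ) (0 - (i : ℕ)) ∈ (span k {(1 : MvPolynomial (Fin 2) k)} : Set _)
    apply subset_span
    simp [h2, h1]
  · rw [span_le, Set.singleton_subset_iff]
    rw [SetLike.mem_coe, mem_homogeneousSubmodule]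
    exact isHomogeneous_one (Fin 2) k

private lemma Rh_one : Rh k 1 = span k {(X 0 : MvPolynomial (Fin 2) k), X 1} := by
  apply le_antisymm
  · rw [Rh_eq_span (k := k) 1, span_le]
    rintro _ ⟨i, rfl⟩
    show mn (k := k) (i : ℕ) (1 - (i : ℕ)) ∈
      (span k {(X 0 : MvPolynomial (Fin 2) k), X 1} : Set _)
    apply subset_span
    fin_cases i
    · right
      show mn (k := k) 0 (1 - 0) = X 1
      rw [← mn_X1]
    · left
      show mn (k := k) 1 (1 - 1) = X 0
      rw [← mn_X0]
  · rw [span_le, Set.insert_subset_iff, Set.singleton_subset_iff]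
    constructor
    · rw [SetLike.mem_coe, mem_homogeneousSubmodule]; exact isHomogeneous_X k 0
    · rw [SetLike.mem_coe, mem_homogeneousSubmodule]; exact isHomogeneous_X k 1

private lemma mulV_eq_sup (V : Submodule k (MvPolynomial (Fin 2) k)) :
    mulV 1 V = map (LinearMap.mulLeft k (X 0)) V ⊔ map (LinearMap.mulLeft k (X 1)) V := by
  apply le_antisymm
  · rw [mulV, span_le]
    rintro p ⟨h, hh, f, hf, rfl⟩
    have hh' : h ∈ span k {(X 0 : MvPolynomial (Fin 2) k), X 1} := by
      rw [← Rh_one]; exact hh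
    obtain ⟨a, b, hab⟩ := mem_span_pair.mp hh'
    have hrw : h * f = a • (X 0 * f) + b • (X 1 * f) := by
      rw [← hab, add_mul, smul_mul_assoc, smul_mul_assoc]
    rw [SetLike.mem_coe, hrw]
    refine add_mem (Submodule.smul_mem _ _ ?_) (Submodule.smul_mem _ _ ?_)
    · exact Submodule.mem_sup_left ⟨f, hf, rfl⟩
    · exact Submodule.mem_sup_right ⟨f, hf, rfl⟩
  · apply sup_le
    · intro p hp
      obtain ⟨v, hv, rfl⟩ := Submodule.mem_map.mp hp
      apply subset_span
      exact ⟨X 0, isHomogeneous_X k 0, v, hv, rfl⟩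
    · intro p hp
      obtain ⟨v, hv, rfl⟩ := Submodule.mem_map.mp hp
      apply subset_span
      exact ⟨X 1, isHomogeneous_X k 1, v, hv, rfl⟩

private lemma mulV_le {V : Submodule k (MvPolynomial (Fin 2) k)} {j : ℕ}
    (hV : V ≤ Rh k j) : mulV 1 V ≤ Rh k (j + 1) := by
  rw [mulV, span_le]
  rintro p ⟨h, hh, f, hf, rfl⟩
  rw [SetLike.mem_coe, mem_homogeneousSubmodule]
  have := (hh : IsHomogeneous h 1).mul (hV hf : IsHomogeneous f j)
  rwa [Nat.add_comm] at this

private lemma mulV_Rh (m : ℕ) : mulV 1 (Rh k m) = Rh k (m + 1) := by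
  apply le_antisymm (mulV_le le_rfl)
  rw [Rh_eq_span (k := k) (m + 1), span_le]
  rintro _ ⟨i, rfl⟩
  have hi := i.isLt
  show mn (k := k) (i : ℕ) (m + 1 - (i : ℕ)) ∈ (mulV 1 (Rh k m) : Set _)
  apply subset_span
  rcases Nat.eq_zero_or_pos (i : ℕ) with h0 | hpos
  · exact ⟨X 1, isHomogeneous_X k 1, mn 0 m, mn_mem (by omega),
      by rw [← mn_X1, mn_mul]; exact mn_congr (by omega) (by omega)⟩
  · exact ⟨X 0, isHomogeneous_X k 0, mn ((i : ℕ) - 1) (m + 1 - (i : ℕ)), mn_mem (by omega),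
      by rw [← mn_X0, mn_mul]; exact mn_congr (by omega) (by omega)⟩

private lemma mulV_map (f : MvPolynomial (Fin 2) k) (W : Submodule k (MvPolynomial (Fin 2) k)) :
    mulV 1 (map (LinearMap.mulLeft k f) W) = map (LinearMap.mulLeft k f) (mulV 1 W) := by
  rw [mulV, mulV, Submodule.map_span]
  congr 1
  ext p
  simp only [Set.mem_setOf_eq, Set.mem_image]
  constructor
  · rintro ⟨h, hh, g, hg, rfl⟩
    obtain ⟨w, hw, rfl⟩ := Submodule.mem_map.mp hg
    refine ⟨h * w, ⟨h, hh, w, hw, rfl⟩, ?_⟩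
    simp only [LinearMap.mulLeft_apply]
    ring
  · rintro ⟨q, ⟨h, hh, w, hw, rfl⟩, rfl⟩
    refine ⟨h, hh, f * w, ⟨w, hw, rfl⟩, ?_⟩
    simp only [LinearMap.mulLeft_apply]
    ring

private lemma finrank_map_mulLeft {f : MvPolynomial (Fin 2) k} (hf : f ≠ 0)
    (W : Submodule k (MvPolynomial (Fin 2) k)) :
    finrank k (map (LinearMap.mulLeft k f) W) = finrank k W :=
  (LinearEquiv.finrank_eq
    (Submodule.equivMapOfInjective _ (mul_right_injective₀ hf) W)).symm

/-- The minimal exponent of variable `t` among the monomials of `p`. -/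
private noncomputable def nu (t : Fin 2) (p : MvPolynomial (Fin 2) k) : ℕ :=
  if h : p.support.Nonempty then p.support.inf' h (fun d => d t) else 0

private lemma support_nonempty_of_ne {p : MvPolynomial (Fin 2) k} (hp : p ≠ 0) :
    p.support.Nonempty :=
  Finset.nonempty_iff_ne_empty.mpr (fun h => hp (support_eq_empty.mp h))

private lemma nu_def (t : Fin 2) (p : MvPolynomial (Fin 2) k) :
    nu t p = if h : p.support.Nonempty then p.support.inf' h (fun d => d t) else 0 := rfl

private lemma nu_le (t : Fin 2) {p : MvPolynomial (Fin 2) k} {d : Fin 2 →₀ ℕ}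
    (hd : d ∈ p.support) : nu t p ≤ d t := by
  rw [nu_def, dif_pos ⟨d, hd⟩]
  exact Finset.inf'_le _ hd

private lemma exists_nu (t : Fin 2) {p : MvPolynomial (Fin 2) k} (hp : p ≠ 0) :
    ∃ d ∈ p.support, nu t p = d t := by
  have h := support_nonempty_of_ne hp
  rw [nu_def, dif_pos h]
  obtain ⟨d, hd, hmin⟩ := Finset.exists_mem_eq_inf' h (fun d => d t)
  exact ⟨d, hd, hmin⟩

private lemma mem_support_X_mul (s : Fin 2) {p : MvPolynomial (Fin 2) k} {d : Fin 2 →₀ ℕ}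
    (hd : d ∈ p.support) : Finsupp.single s 1 + d ∈ (X s * p).support := by
  rw [support_X_mul, Finset.mem_map]
  exact ⟨d, hd, by simp⟩

private lemma nu_X_mul {s t : Fin 2} (hst : s ≠ t) {p : MvPolynomial (Fin 2) k} (hp : p ≠ 0) :
    nu t (X s * p) = nu t p := by
  have hXp : (X s : MvPolynomial (Fin 2) k) * p ≠ 0 := mul_ne_zero (X_ne_zero s) hp
  apply le_antisymm
  · obtain ⟨d, hd, hnu⟩ := exists_nu t hp
    have h2 := nu_le t (mem_support_X_mul s hd)
    rw [hnu]
    simpa [Finsupp.add_apply, Finsupp.single_apply, hst] using h2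
  · obtain ⟨D, hD, hnu⟩ := exists_nu t hXp
    rw [support_X_mul, Finset.mem_map] at hD
    obtain ⟨d, hd, rfl⟩ := hD
    have h2 : ((addLeftEmbedding (Finsupp.single s 1)) d) t = d t := by
      simp [Finsupp.add_apply, Finsupp.single_apply, hst]
    rw [hnu, h2]
    exact nu_le t hd

private lemma nu_X_mul_self (t : Fin 2) {p : MvPolynomial (Fin 2) k} (hp : p ≠ 0) :
    nu t (X t * p) = nu t p + 1 := by
  have hXp : (X t : MvPolynomial (Fin 2) k) * p ≠ 0 := mul_ne_zero (X_ne_zero t) hp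
  apply le_antisymm
  · obtain ⟨d, hd, hnu⟩ := exists_nu t hp
    have h2 := nu_le t (mem_support_X_mul t hd)
    rw [hnu]
    simpa [Finsupp.add_apply, Finsupp.single_apply, Nat.add_comm] using h2
  · obtain ⟨D, hD, hnu⟩ := exists_nu t hXp
    rw [support_X_mul, Finset.mem_map] at hD
    obtain ⟨d, hd, rfl⟩ := hD
    have h2 : ((addLeftEmbedding (Finsupp.single t 1)) d) t = d t + 1 := by
      simp [Finsupp.add_apply, Finsupp.single_apply, Nat.add_comm]
    rw [hnu, h2]
    exact Nat.add_le_add_right (nu_le t hd) 1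

private lemma not_map_le {s t : Fin 2} (hst : s ≠ t)
    {W : Submodule k (MvPolynomial (Fin 2) k)} (hW : W ≠ ⊥) :
    ¬ map (LinearMap.mulLeft k (X s)) W ≤ map (LinearMap.mulLeft k (X t)) W := by
  intro hle
  classical
  obtain ⟨w0, hw0W, hw00⟩ := W.ne_bot_iff.mp hW
  have hQ : ∃ n, ∃ w ∈ W, w ≠ 0 ∧ nu t w = n := ⟨_, w0, hw0W, hw00, rfl⟩
  obtain ⟨w, hwW, hw0, hwn⟩ := Nat.find_spec hQ
  have hmem : (X s) * w ∈ map (LinearMap.mulLeft k (X t)) W := hle ⟨w, hwW, rfl⟩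
  obtain ⟨w', hw'W, hw'⟩ := Submodule.mem_map.mp hmem
  rw [LinearMap.mulLeft_apply] at hw'
  have hw'0 : w' ≠ 0 := by
    rintro rfl
    rw [mul_zero] at hw'
    exact mul_ne_zero (X_ne_zero s) hw0 hw'.symm
  have h1 : nu t w' + 1 = Nat.find hQ := by
    rw [← hwn, ← nu_X_mul hst hw0, ← hw']
    exact (nu_X_mul_self t hw'0).symm
  have h2 : Nat.find hQ ≤ nu t w' := Nat.find_min' hQ ⟨w', hw'W, hw'0, rfl⟩
  omega

private lemma prime_X0 : Prime (X 0 : MvPolynomial (Fin 2) k) := by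
  rw [← MulEquiv.prime_iff (MvPolynomial.finSuccEquiv k 1).toRingEquiv.toMulEquiv]
  have h : ((MvPolynomial.finSuccEquiv k 1).toRingEquiv.toMulEquiv) (X 0)
      = (Polynomial.X : Polynomial (MvPolynomial (Fin 1) k)) := by
    simpa using finSuccEquiv_X_zero (R := k) (n := 1)
  rw [h]
  exact Polynomial.prime_X

private lemma not_X0_dvd_X1_pow (n : ℕ) :
    ¬ (X 0 : MvPolynomial (Fin 2) k) ∣ (X 1) ^ n := by
  intro h
  have h1 : (X 0 : MvPolynomial (Fin 2) k) ∣ X 1 := prime_X0.dvd_of_dvd_pow h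
  obtain ⟨q, hq⟩ := h1
  have := congrArg (eval fun i : Fin 2 => if i = 0 then (0 : k) else 1) hq
  simp at this

private lemma isHom_of_X_mul {s : Fin 2} {p : MvPolynomial (Fin 2) k} {n : ℕ}
    (h : ((X s) * p).IsHomogeneous (n + 1)) : p.IsHomogeneous n := by
  intro d hd
  have h2 : coeff (Finsupp.single s 1 + d) ((X s) * p) ≠ 0 := by rwa [coeff_X_mul]
  have h3 := h h2
  rw [map_add] at h3
  have h4 : (Finsupp.weight (1 : Fin 2 → ℕ)) (Finsupp.single s 1) = 1 := by
    rw [weight_one_fin2]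
    fin_cases s <;> simp
  rw [h4] at h3
  omega

private lemma tau_forward :
    ∀ d j : ℕ, ∀ V : Submodule k (MvPolynomial (Fin 2) k),
      finrank k V = d → V ≤ Rh k j → V ≠ ⊥ → finrank k (mulV 1 V) = d + 1 →
      ∃ f ∈ Rh k (j + 1 - d),
        V = map (LinearMap.mulLeft k f) (Rh k (j - (j + 1 - d))) := by
  intro d
  induction d using Nat.strong_induction_on with
  | _ d IH =>
  intro j V hd hV hne ht
  haveI : FiniteDimensional k V := Submodule.finiteDimensional_of_le hV
  have hdpos : 0 < d := by
    rcases Nat.eq_zero_or_pos d with h0 | h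
    · exfalso
      apply hne
      apply Submodule.finrank_eq_zero.mp
      omega
    · exact h
  have hdj : d ≤ j + 1 := by
    have h := Submodule.finrank_mono (R := k) hV
    rw [finrank_Rh, hd] at h
    omega
  have hX0 : (X 0 : MvPolynomial (Fin 2) k) ≠ 0 := X_ne_zero 0
  have hX1 : (X 1 : MvPolynomial (Fin 2) k) ≠ 0 := X_ne_zero 1
  rcases Nat.lt_or_ge d 2 with hd2 | hd2
  · -- d = 1
    have hd1 : d = 1 := by omega
    subst hd1
    obtain ⟨g, hgV, hg0⟩ := V.ne_bot_iff.mp hne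
    have hsp : V = span k {g} := by
      apply (Submodule.eq_of_le_of_finrank_le (span_le.mpr (by simpa using hgV)) ?_).symm
      rw [finrank_span_singleton hg0, hd]
    simp only [Nat.add_sub_cancel, Nat.sub_self]
    refine ⟨g, hV hgV, ?_⟩
    rw [Rh_zero, Submodule.map_span, Set.image_singleton, hsp, LinearMap.mulLeft_apply, mul_one]
  · -- d ≥ 2
    haveI : FiniteDimensional k (mulV 1 V : Submodule k (MvPolynomial (Fin 2) k)) :=
      Submodule.finiteDimensional_of_le (mulV_le hV)
    have hAle : map (LinearMap.mulLeft k (X 0)) V ≤ mulV 1 V := by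
      rw [mulV_eq_sup]; exact le_sup_left
    have hBle : map (LinearMap.mulLeft k (X 1)) V ≤ mulV 1 V := by
      rw [mulV_eq_sup]; exact le_sup_right
    haveI : FiniteDimensional k (map (LinearMap.mulLeft k (X 0)) V) :=
      Submodule.finiteDimensional_of_le hAle
    haveI : FiniteDimensional k (map (LinearMap.mulLeft k (X 1)) V) :=
      Submodule.finiteDimensional_of_le hBle
    have frA : finrank k (map (LinearMap.mulLeft k (X 0)) V) = d := by
      rw [finrank_map_mulLeft hX0, hd]
    have frB : finrank k (map (LinearMap.mulLeft k (X 1)) V) = d := by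
      rw [finrank_map_mulLeft hX1, hd]
    have hsup : finrank k
        (map (LinearMap.mulLeft k (X 0)) V ⊔ map (LinearMap.mulLeft k (X 1)) V : Submodule k _)
        = d + 1 := by
      rw [← mulV_eq_sup]; exact ht
    have hinf : finrank k
        (map (LinearMap.mulLeft k (X 0)) V ⊓ map (LinearMap.mulLeft k (X 1)) V : Submodule k _)
        = d - 1 := by
      have h := Submodule.finrank_sup_add_finrank_inf_eq
        (map (LinearMap.mulLeft k (X 0)) V) (map (LinearMap.mulLeft k (X 1)) V)
      rw [frA, frB, hsup] at h
      omega
    -- the subspace U = {v ∈ V | X 1 * v ∈ X 0 * V}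
    have hmapU : map (LinearMap.mulLeft k (X 1))
          (V ⊓ Submodule.comap (LinearMap.mulLeft k (X 1)) (map (LinearMap.mulLeft k (X 0)) V))
        = map (LinearMap.mulLeft k (X 0)) V ⊓ map (LinearMap.mulLeft k (X 1)) V := by
      apply le_antisymm
      · intro p hp
        obtain ⟨u, hu, rfl⟩ := Submodule.mem_map.mp hp
        obtain ⟨hu1, hu2⟩ := Submodule.mem_inf.mp hu
        exact Submodule.mem_inf.mpr ⟨hu2, ⟨u, hu1, rfl⟩⟩
      · intro p hp
        obtain ⟨hpA, hpB⟩ := Submodule.mem_inf.mp hp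
        obtain ⟨v, hv, rfl⟩ := Submodule.mem_map.mp hpB
        exact ⟨v, Submodule.mem_inf.mpr ⟨hv, hpA⟩, rfl⟩
    have hUV : V ⊓ Submodule.comap (LinearMap.mulLeft k (X 1))
        (map (LinearMap.mulLeft k (X 0)) V) ≤ V := inf_le_left
    have hUle : V ⊓ Submodule.comap (LinearMap.mulLeft k (X 1))
        (map (LinearMap.mulLeft k (X 0)) V) ≤ Rh k j := hUV.trans hV
    haveI : FiniteDimensional k (V ⊓ Submodule.comap (LinearMap.mulLeft k (X 1))
        (map (LinearMap.mulLeft k (X 0)) V) : Submodule k _) :=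
      Submodule.finiteDimensional_of_le hUle
    have frU : finrank k (V ⊓ Submodule.comap (LinearMap.mulLeft k (X 1))
        (map (LinearMap.mulLeft k (X 0)) V) : Submodule k _) = d - 1 := by
      rw [← hinf, ← hmapU, finrank_map_mulLeft hX1]
    have hUne : V ⊓ Submodule.comap (LinearMap.mulLeft k (X 1))
        (map (LinearMap.mulLeft k (X 0)) V) ≠ ⊥ := by
      intro h
      rw [h, finrank_bot] at frU
      omega
    haveI : FiniteDimensional k (mulV 1 (V ⊓ Submodule.comap (LinearMap.mulLeft k (X 1))
        (map (LinearMap.mulLeft k (X 0)) V)) : Submodule k _) :=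
      Submodule.finiteDimensional_of_le (mulV_le hUle)
    have hmulUle : mulV 1 (V ⊓ Submodule.comap (LinearMap.mulLeft k (X 1))
        (map (LinearMap.mulLeft k (X 0)) V)) ≤ map (LinearMap.mulLeft k (X 0)) V := by
      rw [mulV_eq_sup]
      apply sup_le
      · exact Submodule.map_mono hUV
      · rw [hmapU]; exact inf_le_left
    have hxle : map (LinearMap.mulLeft k (X 0)) (V ⊓ Submodule.comap (LinearMap.mulLeft k (X 1))
          (map (LinearMap.mulLeft k (X 0)) V))
        ≤ mulV 1 (V ⊓ Submodule.comap (LinearMap.mulLeft k (X 1))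
          (map (LinearMap.mulLeft k (X 0)) V)) := by
      rw [mulV_eq_sup]; exact le_sup_left
    have hyle : map (LinearMap.mulLeft k (X 1)) (V ⊓ Submodule.comap (LinearMap.mulLeft k (X 1))
          (map (LinearMap.mulLeft k (X 0)) V))
        ≤ mulV 1 (V ⊓ Submodule.comap (LinearMap.mulLeft k (X 1))
          (map (LinearMap.mulLeft k (X 0)) V)) := by
      rw [mulV_eq_sup]; exact le_sup_right
    haveI : FiniteDimensional k
        (map (LinearMap.mulLeft k (X 0)) (V ⊓ Submodule.comap (LinearMap.mulLeft k (X 1))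
          (map (LinearMap.mulLeft k (X 0)) V))) :=
      Submodule.finiteDimensional_of_le (hxle.trans (mulV_le hUle))
    haveI : FiniteDimensional k
        (map (LinearMap.mulLeft k (X 1)) (V ⊓ Submodule.comap (LinearMap.mulLeft k (X 1))
          (map (LinearMap.mulLeft k (X 0)) V))) :=
      Submodule.finiteDimensional_of_le (hyle.trans (mulV_le hUle))
    have hup : finrank k (mulV 1 (V ⊓ Submodule.comap (LinearMap.mulLeft k (X 1))
        (map (LinearMap.mulLeft k (X 0)) V)) : Submodule k _) ≤ d := by
      have h := Submodule.finrank_mono (R := k) hmulUle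
      rw [frA] at h
      exact h
    have hlow : d ≤ finrank k (mulV 1 (V ⊓ Submodule.comap (LinearMap.mulLeft k (X 1))
        (map (LinearMap.mulLeft k (X 0)) V)) : Submodule k _) := by
      have hformula := Submodule.finrank_sup_add_finrank_inf_eq
        (map (LinearMap.mulLeft k (X 0)) (V ⊓ Submodule.comap (LinearMap.mulLeft k (X 1))
          (map (LinearMap.mulLeft k (X 0)) V)))
        (map (LinearMap.mulLeft k (X 1)) (V ⊓ Submodule.comap (LinearMap.mulLeft k (X 1))
          (map (LinearMap.mulLeft k (X 0)) V)))
      have hlt : map (LinearMap.mulLeft k (X 0)) (V ⊓ Submodule.comap (LinearMap.mulLeft k (X 1))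
            (map (LinearMap.mulLeft k (X 0)) V))
          ⊓ map (LinearMap.mulLeft k (X 1)) (V ⊓ Submodule.comap (LinearMap.mulLeft k (X 1))
            (map (LinearMap.mulLeft k (X 0)) V))
          < map (LinearMap.mulLeft k (X 0)) (V ⊓ Submodule.comap (LinearMap.mulLeft k (X 1))
            (map (LinearMap.mulLeft k (X 0)) V)) := by
        apply lt_of_le_of_ne inf_le_left
        intro heq
        exact not_map_le (s := 0) (t := 1) (by decide) hUne (inf_eq_left.mp heq)
      have h2 := Submodule.finrank_lt_finrank_of_lt hlt
      have h3 : finrank k (map (LinearMap.mulLeft k (X 0))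
          (V ⊓ Submodule.comap (LinearMap.mulLeft k (X 1))
            (map (LinearMap.mulLeft k (X 0)) V))) = d - 1 := by
        rw [finrank_map_mulLeft hX0, frU]
      have h4 : finrank k (map (LinearMap.mulLeft k (X 1))
          (V ⊓ Submodule.comap (LinearMap.mulLeft k (X 1))
            (map (LinearMap.mulLeft k (X 0)) V))) = d - 1 := by
        rw [finrank_map_mulLeft hX1, frU]
      rw [← mulV_eq_sup, h3, h4] at hformula
      rw [h3] at h2
      omega
    have hmulU : finrank k (mulV 1 (V ⊓ Submodule.comap (LinearMap.mulLeft k (X 1))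
        (map (LinearMap.mulLeft k (X 0)) V)) : Submodule k _) = (d - 1) + 1 := by omega
    obtain ⟨f, hf, hUeq⟩ := IH (d - 1) (by omega) j _ frU hUle hUne hmulU
    have e1 : j - (j + 1 - (d - 1)) = d - 2 := by omega
    have e2 : d - 2 + 1 = d - 1 := by omega
    have hmulUeq : mulV 1 (V ⊓ Submodule.comap (LinearMap.mulLeft k (X 1))
          (map (LinearMap.mulLeft k (X 0)) V))
        = map (LinearMap.mulLeft k f) (Rh k (d - 1)) := by
      rw [hUeq, e1, mulV_map, mulV_Rh, e2]
    have hf0 : f ≠ 0 := by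
      rintro rfl
      rw [LinearMap.mulLeft_zero_eq_zero, Submodule.map_zero] at hUeq
      exact hUne hUeq
    have hAeq : map (LinearMap.mulLeft k (X 0)) V
        = map (LinearMap.mulLeft k f) (Rh k (d - 1)) := by
      apply (Submodule.eq_of_le_of_finrank_le (hmulUeq ▸ hmulUle) ?_).symm
      rw [finrank_map_mulLeft hf0, finrank_Rh, frA]
      omega
    have hdvd : (X 0 : MvPolynomial (Fin 2) k) ∣ f := by
      have hmem : f * (X 1) ^ (d - 1) ∈ map (LinearMap.mulLeft k f) (Rh k (d - 1)) :=
        ⟨(X 1) ^ (d - 1), isHomogeneous_X_pow 1 (d - 1), by rw [LinearMap.mulLeft_apply]⟩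
      rw [← hAeq] at hmem
      obtain ⟨v, hv, hveq⟩ := Submodule.mem_map.mp hmem
      rw [LinearMap.mulLeft_apply] at hveq
      have hdd : (X 0 : MvPolynomial (Fin 2) k) ∣ f * (X 1) ^ (d - 1) := ⟨v, hveq.symm⟩
      rcases (prime_X0.2.2 _ _ hdd) with h | h
      · exact h
      · exact absurd h (not_X0_dvd_X1_pow _)
    obtain ⟨f', hf'⟩ := hdvd
    have hVeq : V = map (LinearMap.mulLeft k f') (Rh k (d - 1)) := by
      apply Submodule.map_injective_of_injective (f := LinearMap.mulLeft k (X 0)) (mul_right_injective₀ hX0)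
      rw [hAeq, hf', LinearMap.mulLeft_mul, Submodule.map_comp]
    have hf'h : f' ∈ Rh k (j + 1 - d) := by
      have hfh : IsHomogeneous f (j + 1 - (d - 1)) := hf
      have heq : j + 1 - (d - 1) = (j + 1 - d) + 1 := by omega
      rw [heq, hf'] at hfh
      rw [mem_homogeneousSubmodule]
      exact isHom_of_X_mul hfh
    have e3 : j - (j + 1 - d) = d - 1 := by omega
    exact ⟨f', hf'h, by rw [e3]; exact hVeq⟩

end Aux

/-- For a nonzero subspace `V ⊆ R_j`, `τ(V) = 1` iff `V = f · R_{j−c}` for a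
homogeneous form `f` of degree `c = j+1−dim V`. -/
theorem tau_eq_one_iff (j : ℕ) (V : Submodule k (MvPolynomial (Fin 2) k))
    (hV : V ≤ Rh k j) (hne : V ≠ ⊥) :
    (Module.finrank k (mulV 1 V) : ℤ) - (Module.finrank k V : ℤ) = 1 ↔
      ∃ f ∈ Rh k (j + 1 - Module.finrank k V),
        V = Submodule.map (LinearMap.mulLeft k f)
          (Rh k (j - (j + 1 - Module.finrank k V))) := by
  haveI : FiniteDimensional k V := Submodule.finiteDimensional_of_le hV
  haveI : FiniteDimensional k (mulV 1 V : Submodule k (MvPolynomial (Fin 2) k)) :=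
    Submodule.finiteDimensional_of_le (mulV_le hV)
  constructor
  · intro h
    have hnat : finrank k (mulV 1 V) = finrank k V + 1 := by omega
    exact tau_forward (finrank k V) j V rfl hV hne hnat
  · rintro ⟨f, hf, hVeq⟩
    have hf0 : f ≠ 0 := by
      rintro rfl
      rw [LinearMap.mulLeft_zero_eq_zero, Submodule.map_zero] at hVeq
      exact hne hVeq
    have hd := congrArg (fun W : Submodule k (MvPolynomial (Fin 2) k) => finrank k W) hVeq
    rw [finrank_map_mulLeft hf0, finrank_Rh] at hd
    have hmul := congrArg (mulV 1) hVeq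
    rw [mulV_map, mulV_Rh] at hmul
    have h2 := congrArg (fun W : Submodule k (MvPolynomial (Fin 2) k) => finrank k W) hmul
    rw [finrank_map_mulLeft hf0, finrank_Rh] at h2
    rw [h2]
    omega
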